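/- Let D = (d_{ij}) be an n×n nonnegative matrix whose every row sum and column sum equals n, and let Λ_D : M_n(ℂ) → M_n(ℂ) be the D-type map Λ_D(A) = diag(∑_k a_{kk} d_{k1}, …, ∑_k a_{kk} d_{kn}) − A. If d_{ii} ≥ n − 1 for all i, then Λ_D is positive. -/

import Mathlib

open Finset in
lemma perm_lemma {n : ℕ} (hn : 2 ≤ n) (τ : Equiv.Perm (Fin n)) (a : Fin n → ℝ)
    (ha : ∀ i, 0 < a i) :
    ∑ j, a j / (((n : ℝ) - 1) * a j + a (τ j)) ≤ 1 := by
  have hn' : (2:ℝ) ≤ (n:ℝ) := by exact_mod_cast hn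
  set m : ℝ := (n : ℝ) - 1 with hm
  have hm1 : (1 : ℝ) ≤ m := by simp only [hm]; linarith
  have hmpos : (0:ℝ) < m := by linarith
  set c : Fin n → ℝ := fun j => m * a j + a (τ j) with hc
  have hcpos : ∀ j, 0 < c j := fun j => by
    have h1 := ha j; have h2 := ha (τ j); positivity
  set T : Fin n → ℝ := fun j => a j / c j with hT
  set u : Fin n → ℝ := fun j => a (τ j) / c j with hu
  have hTpos : ∀ j, 0 < T j := fun j => div_pos (ha j) (hcpos j)
  have hupos : ∀ j, 0 < u j := fun j => div_pos (ha (τ j)) (hcpos j)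
  have huT : ∀ j, u j = 1 - m * T j := by
    intro j
    have := (hcpos j).ne'
    simp only [hT, hu]
    field_simp
    simp only [hc]
    ring
  have hprod : ∏ j, T j = ∏ j, u j := by
    simp only [hT, hu]
    rw [Finset.prod_div_distrib, Finset.prod_div_distrib]
    congr 1
    exact (Equiv.prod_comp τ a).symm
  by_contra hcon
  push_neg at hcon
  have hsumu : ∑ j, u j < 1 := by
    have h1 : ∑ j, u j = (n:ℝ) - m * ∑ j, T j := by
      simp only [huT, Finset.sum_sub_distrib, ← Finset.mul_sum]
      simp [Finset.card_univ]
    rw [h1]; nlinarith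
  have hcard : ∀ i : Fin n, ((univ.erase i).card : ℝ) = m := by
    intro i
    rw [Finset.card_erase_of_mem (Finset.mem_univ i)]
    simp only [Finset.card_univ, Fintype.card_fin]
    rw [Nat.cast_sub (by omega)]
    simp [hm]
  have key : ∀ i : Fin n, (∏ j ∈ univ.erase i, u j) ^ (m⁻¹) < T i := by
    intro i
    have amgm := Real.geom_mean_le_arith_mean_weighted (univ.erase i)
      (fun _ => m⁻¹) u (fun _ _ => by positivity)
      (by rw [Finset.sum_const, nsmul_eq_mul, hcard i, mul_inv_cancel₀ hmpos.ne'])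
      (fun j _ => (hupos j).le)
    rw [Real.finset_prod_rpow _ _ (fun j _ => (hupos j).le)] at amgm
    have hsplit : ∑ j ∈ univ.erase i, u j = (∑ j, u j) - u i := by
      rw [← Finset.sum_erase_add univ u (Finset.mem_univ i)]; ring
    have h2 : ∑ j ∈ univ.erase i, m⁻¹ * u j = m⁻¹ * ((∑ j, u j) - u i) := by
      rw [← Finset.mul_sum, hsplit]
    calc (∏ j ∈ univ.erase i, u j) ^ (m⁻¹) ≤ m⁻¹ * ((∑ j, u j) - u i) := by
          rw [← h2]; exact amgm
      _ < m⁻¹ * (1 - u i) := by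
          apply mul_lt_mul_of_pos_left _ (by positivity)
          linarith
      _ = T i := by rw [huT i]; field_simp; ring
  have hlt : ∏ i, ((∏ j ∈ univ.erase i, u j) ^ (m⁻¹)) < ∏ i, T i := by
    apply Finset.prod_lt_prod_of_nonempty
    · intro i _
      have : 0 < ∏ j ∈ univ.erase i, u j := Finset.prod_pos (fun j _ => hupos j)
      positivity
    · intro i _; exact key i
    · have : Nonempty (Fin n) := ⟨⟨0, by omega⟩⟩
      exact Finset.univ_nonempty
  have heq : ∏ i, ((∏ j ∈ univ.erase i, u j) ^ (m⁻¹)) = ∏ j, u j := by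
    have hPpos : 0 < ∏ j, u j := Finset.prod_pos (fun j _ => hupos j)
    have h1 : ∀ i : Fin n, ∏ j ∈ univ.erase i, u j = (∏ j, u j) / u i := by
      intro i
      rw [eq_div_iff (hupos i).ne']
      exact Finset.prod_erase_mul univ u (Finset.mem_univ i)
    calc ∏ i, ((∏ j ∈ univ.erase i, u j) ^ (m⁻¹))
        = (∏ i, ∏ j ∈ univ.erase i, u j) ^ (m⁻¹) := by
          rw [Real.finset_prod_rpow _ _ (fun i _ =>
            (Finset.prod_pos (fun j _ => hupos j)).le)]
      _ = ((∏ j, u j) ^ (n - 1 : ℕ)) ^ (m⁻¹) := by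
          congr 1
          simp only [h1]
          rw [Finset.prod_div_distrib, Finset.prod_const, Finset.card_univ, Fintype.card_fin]
          rw [eq_comm, pow_sub₀ _ hPpos.ne' (by omega : 1 ≤ n)]
          rw [div_eq_mul_inv, pow_one]
      _ = ∏ j, u j := by
          rw [← Real.rpow_natCast ((∏ j, u j)) (n-1), ← Real.rpow_mul hPpos.le]
          have : ((n - 1 : ℕ) : ℝ) = m := by
            rw [Nat.cast_sub (by omega)]; simp [hm]
          rw [this, mul_inv_cancel₀ hmpos.ne', Real.rpow_one]
  rw [heq, hprod] at hlt
  exact lt_irrefl _ hlt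


open Finset Matrix in
lemma ds_lemma {n : ℕ} (hn : 2 ≤ n) (d : Fin n → Fin n → ℝ) (hd : ∀ i j, 0 ≤ d i j)
    (hrow : ∀ i, ∑ j, d i j = n) (hcol : ∀ j, ∑ i, d i j = n)
    (hdiag : ∀ i, (n : ℝ) - 1 ≤ d i i) (a : Fin n → ℝ) (ha : ∀ i, 0 < a i) :
    ∑ j, a j / (∑ i, d i j * a i) ≤ 1 := by
  have hn1 : (1:ℝ) ≤ (n:ℝ) - 1 := by
    have : (2:ℝ) ≤ (n:ℝ) := by exact_mod_cast hn
    linarith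
  set S : Matrix (Fin n) (Fin n) ℝ :=
    Matrix.of (fun i j => d i j - if i = j then (n:ℝ)-1 else 0) with hSdef
  have hSapp : ∀ i j, S i j = d i j - if i = j then (n:ℝ)-1 else 0 := fun i j => rfl
  have hS : S ∈ doublyStochastic ℝ (Fin n) := by
    rw [mem_doublyStochastic_iff_sum]
    refine ⟨fun i j => ?_, fun i => ?_, fun j => ?_⟩
    · rw [hSapp]
      by_cases h : i = j
      · subst h; rw [if_pos rfl]; linarith [hdiag i]
      · simp only [if_neg h, sub_zero]; exact hd i j
    · simp only [hSapp, Finset.sum_sub_distrib, hrow i, Finset.sum_ite_eq,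
        Finset.mem_univ, if_true]
      ring
    · simp only [hSapp, Finset.sum_sub_distrib, hcol j, Finset.sum_ite_eq',
        Finset.mem_univ, if_true]
      ring
  obtain ⟨w, hw0, hw1, hwS⟩ := exists_eq_sum_perm_of_mem_doublyStochastic hS
  -- entries of permutation matrices
  have hperm : ∀ (σ : Equiv.Perm (Fin n)) j, ∑ i, (σ.permMatrix ℝ) i j * a i = a (σ⁻¹ j) := by
    intro σ j
    rw [Finset.sum_eq_single (σ⁻¹ j)]
    · simp [Equiv.Perm.permMatrix, PEquiv.toMatrix_apply, Equiv.toPEquiv_apply]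
    · intro i _ hi
      have : σ i ≠ j := fun h => hi (by simp [← h])
      simp [Equiv.Perm.permMatrix, PEquiv.toMatrix_apply, Equiv.toPEquiv_apply, this]
    · simp
  have hSentry : ∀ i j, S i j = ∑ σ : Equiv.Perm (Fin n), w σ * (σ.permMatrix ℝ) i j := by
    intro i j
    rw [← hwS]
    simp [Matrix.sum_apply, Matrix.smul_apply, smul_eq_mul]
  set x : Equiv.Perm (Fin n) → Fin n → ℝ :=
    fun σ j => ((n:ℝ)-1) * a j + a (σ⁻¹ j) with hx
  have hxpos : ∀ σ j, 0 < x σ j := by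
    intro σ j
    have h1 := ha j; have h2 := ha (σ⁻¹ j)
    have : 0 < ((n:ℝ)-1) * a j := by positivity
    simp only [hx]; linarith
  have hc : ∀ j, ∑ i, d i j * a i = ∑ σ : Equiv.Perm (Fin n), w σ * x σ j := by
    intro j
    have h1 : ∑ i, d i j * a i = ((n:ℝ)-1) * a j + ∑ i, S i j * a i := by
      simp only [hSapp, sub_mul, Finset.sum_sub_distrib]
      have : ∑ i, (if i = j then (n:ℝ)-1 else 0) * a i = ((n:ℝ)-1) * a j := by
        rw [Finset.sum_eq_single j] <;> simp +contextual
      rw [this]; ring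
    have h2 : ∑ i, S i j * a i = ∑ σ : Equiv.Perm (Fin n), w σ * a (σ⁻¹ j) := by
      simp only [hSentry, Finset.sum_mul]
      rw [Finset.sum_comm]
      congr 1; ext σ
      have hh : ∀ i : Fin n, w σ * Equiv.Perm.permMatrix ℝ σ i j * a i
          = w σ * (Equiv.Perm.permMatrix ℝ σ i j * a i) := fun i => by ring
      simp_rw [hh, ← Finset.mul_sum, hperm σ j]
    rw [h1, h2, hx]
    simp only [mul_add, Finset.sum_add_distrib, ← Finset.sum_mul, hw1, one_mul]
  have hcpos : ∀ j, 0 < ∑ i, d i j * a i := by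
    intro j
    rw [hc j]
    have hex : ∃ σ : Equiv.Perm (Fin n), 0 < w σ := by
      by_contra hno
      push_neg at hno
      have : ∑ σ : Equiv.Perm (Fin n), w σ = 0 :=
        Finset.sum_eq_zero fun σ _ => le_antisymm (hno σ) (hw0 σ)
      rw [hw1] at this; norm_num at this
    obtain ⟨σ₀, hσ₀⟩ := hex
    apply Finset.sum_pos' (fun σ _ => mul_nonneg (hw0 σ) (hxpos σ _).le)
    exact ⟨σ₀, Finset.mem_univ _, mul_pos hσ₀ (hxpos σ₀ _)⟩
  -- Jensen (harmonic-arithmetic) per j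
  have jensen : ∀ j, a j / (∑ i, d i j * a i) ≤
      ∑ σ : Equiv.Perm (Fin n), w σ * (a j / x σ j) := by
    intro j
    have hCS := Finset.sum_sq_le_sum_mul_sum_of_sq_eq_mul Finset.univ
      (f := fun σ : Equiv.Perm (Fin n) => w σ * x σ j)
      (g := fun σ : Equiv.Perm (Fin n) => w σ / x σ j)
      (r := w)
      (fun σ _ => mul_nonneg (hw0 σ) (hxpos σ j).le)
      (fun σ _ => div_nonneg (hw0 σ) (hxpos σ j).le)
      (fun σ _ => by
        calc w σ ^ 2 = (w σ * w σ) * (x σ j * (x σ j)⁻¹) := by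
              rw [mul_inv_cancel₀ (hxpos σ j).ne']; ring
          _ = (w σ * x σ j) * (w σ / x σ j) := by rw [div_eq_mul_inv]; ring)
    rw [hw1, one_pow] at hCS
    set C := ∑ i, d i j * a i with hCdef
    have hC : ∑ σ : Equiv.Perm (Fin n), w σ * x σ j = C := (hc j).symm
    rw [hC] at hCS
    set G := ∑ σ : Equiv.Perm (Fin n), w σ / x σ j with hG
    have hGnn : 0 ≤ G := Finset.sum_nonneg fun σ _ => div_nonneg (hw0 σ) (hxpos σ j).le
    have hCpos := hcpos j
    rw [← hCdef] at hCpos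
    rw [div_le_iff₀ hCpos]
    have : ∑ σ : Equiv.Perm (Fin n), w σ * (a j / x σ j) = a j * G := by
      rw [hG, Finset.mul_sum]
      congr 1; ext σ; ring
    rw [this]
    have := ha j
    nlinarith
  calc ∑ j, a j / (∑ i, d i j * a i)
      ≤ ∑ j, ∑ σ : Equiv.Perm (Fin n), w σ * (a j / x σ j) :=
        Finset.sum_le_sum fun j _ => jensen j
    _ = ∑ σ : Equiv.Perm (Fin n), w σ * ∑ j, a j / x σ j := by
        rw [Finset.sum_comm]
        congr 1; ext σ
        rw [Finset.mul_sum]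
    _ ≤ ∑ σ : Equiv.Perm (Fin n), w σ * 1 := by
        apply Finset.sum_le_sum
        intro σ _
        apply mul_le_mul_of_nonneg_left _ (hw0 σ)
        exact perm_lemma hn σ⁻¹ a ha
    _ = 1 := by simp only [mul_one]; exact hw1


open Finset in
lemma quad_lemma {n : ℕ} (d : Fin n → Fin n → ℝ) (hd : ∀ i j, 0 ≤ d i j)
    (hrow : ∀ i, ∑ j, d i j = n) (hcol : ∀ j, ∑ i, d i j = n)
    (hdiag : ∀ i, (n : ℝ) - 1 ≤ d i i)
    (a y : Fin n → ℝ) (ha : ∀ i, 0 ≤ a i) (hy : ∀ i, 0 ≤ y i) :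
    (∑ i, Real.sqrt (a i) * y i)^2 ≤ ∑ j, (∑ i, d i j * a i) * y j^2 := by
  by_cases hn : 2 ≤ n
  case neg =>
    interval_cases n
    · simp
    · have h1 : d 0 0 = 1 := by simpa using hrow 0
      simp only [Fin.sum_univ_one, h1, one_mul]
      rw [mul_pow, Real.sq_sqrt (ha 0)]
  case pos =>
  have hn2 : (2:ℝ) ≤ (n:ℝ) := by exact_mod_cast hn
  have key : ∀ ε : ℝ, 0 < ε →
      (∑ i, Real.sqrt (a i) * y i)^2 ≤
        (∑ j, (∑ i, d i j * a i) * y j^2) + ε * ((n:ℝ) * ∑ j, y j^2) := by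
    intro ε hε
    set a' : Fin n → ℝ := fun i => a i + ε with ha'
    have ha'pos : ∀ i, 0 < a' i := fun i => by have := ha i; simp only [ha']; positivity
    set c' : Fin n → ℝ := fun j => ∑ i, d i j * a' i with hc'
    have hc'pos : ∀ j, 0 < c' j := by
      intro j
      simp only [hc']
      apply Finset.sum_pos' (fun i _ => mul_nonneg (hd i j) (ha'pos i).le)
      refine ⟨j, Finset.mem_univ j, mul_pos ?_ (ha'pos j)⟩
      linarith [hdiag j]
    have step1 : (∑ i, Real.sqrt (a i) * y i)^2 ≤ (∑ i, Real.sqrt (a' i) * y i)^2 := by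
      apply pow_le_pow_left₀
      · exact Finset.sum_nonneg fun i _ => mul_nonneg (Real.sqrt_nonneg _) (hy i)
      · apply Finset.sum_le_sum
        intro i _
        apply mul_le_mul_of_nonneg_right _ (hy i)
        apply Real.sqrt_le_sqrt
        simp only [ha']; linarith
    have step2 : (∑ i, Real.sqrt (a' i) * y i)^2 ≤
        (∑ j, a' j / c' j) * (∑ j, c' j * y j^2) := by
      apply Finset.sum_sq_le_sum_mul_sum_of_sq_eq_mul
      · intro j _; exact (div_nonneg (ha'pos j).le (hc'pos j).le)
      · intro j _; exact mul_nonneg (hc'pos j).le (sq_nonneg _)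
      · intro j _
        rw [mul_pow, Real.sq_sqrt (ha'pos j).le, div_mul_eq_mul_div, eq_comm,
          div_eq_iff (hc'pos j).ne']
        ring
    have step3 : (∑ j, a' j / c' j) ≤ 1 :=
      ds_lemma hn d hd hrow hcol hdiag a' ha'pos
    have step4 : (∑ j, a' j / c' j) * (∑ j, c' j * y j^2) ≤ ∑ j, c' j * y j^2 :=
      mul_le_of_le_one_left
        (Finset.sum_nonneg fun j _ => mul_nonneg (hc'pos j).le (sq_nonneg _)) step3
    have step5 : ∑ j, c' j * y j^2 =
        (∑ j, (∑ i, d i j * a i) * y j^2) + ε * ((n:ℝ) * ∑ j, y j^2) := by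
      have hcj : ∀ j, c' j = (∑ i, d i j * a i) + ε * (n:ℝ) := by
        intro j
        simp only [hc', ha', mul_add, Finset.sum_add_distrib]
        rw [← Finset.sum_mul, hcol j]
        ring
      simp only [hcj, add_mul, Finset.sum_add_distrib]
      congr 1
      simp [Finset.mul_sum, mul_assoc]
    calc (∑ i, Real.sqrt (a i) * y i)^2 ≤ (∑ i, Real.sqrt (a' i) * y i)^2 := step1
      _ ≤ (∑ j, a' j / c' j) * (∑ j, c' j * y j^2) := step2
      _ ≤ ∑ j, c' j * y j^2 := step4
      _ = _ := step5
  apply le_of_forall_pos_le_add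
  intro ε hε
  set K : ℝ := (n:ℝ) * ∑ j, y j^2 with hK
  have hKnn : 0 ≤ K := by
    apply mul_nonneg (by positivity)
    exact Finset.sum_nonneg fun j _ => sq_nonneg _
  have hδ : 0 < ε / (K + 1) := by positivity
  calc (∑ i, Real.sqrt (a i) * y i)^2
      ≤ (∑ j, (∑ i, d i j * a i) * y j^2) + (ε / (K+1)) * K := key _ hδ
    _ ≤ (∑ j, (∑ i, d i j * a i) * y j^2) + ε := by
        have : (ε / (K+1)) * K ≤ ε := by
          rw [div_mul_eq_mul_div, div_le_iff₀ (by linarith)]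
          nlinarith
        linarith


open Matrix ComplexOrder in
/-- if `D` is nonnegative with all row and column sums equal to
`n` and `d_{ii} ≥ n − 1`, then the `D`-type map `Λ_D` is positive. -/
theorem stmt_16 {n : ℕ} (d : Fin n → Fin n → ℝ) (hd : ∀ i j, 0 ≤ d i j)
    (hrow : ∀ i, ∑ j, d i j = n) (hcol : ∀ j, ∑ i, d i j = n)
    (hdiag : ∀ i, (n : ℝ) - 1 ≤ d i i)
    (L : Matrix (Fin n) (Fin n) ℂ → Matrix (Fin n) (Fin n) ℂ)
    (hL : ∀ A, L A = Matrix.diagonal (fun j => ∑ i, (d i j : ℂ) * A i i) - A) :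
    ∀ A : Matrix (Fin n) (Fin n) ℂ, A.PosSemidef → (L A).PosSemidef := by
  intro A hA
  obtain ⟨B, hB⟩ : ∃ B : Matrix (Fin n) (Fin n) ℂ, A = Bᴴ * B := by
    open scoped MatrixOrder in
    obtain ⟨B, hB⟩ := CStarAlgebra.nonneg_iff_eq_star_mul_self.mp hA.nonneg
    exact ⟨B, hB⟩
  set a : Fin n → ℝ := fun i => ∑ k, ‖B k i‖ ^ 2 with hadef
  have ha : ∀ i, 0 ≤ a i := fun i => Finset.sum_nonneg fun k _ => sq_nonneg _
  have hAdiag : ∀ i, A i i = (a i : ℝ) := by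
    intro i
    rw [hB]
    simp only [Matrix.mul_apply, Matrix.conjTranspose_apply]
    rw [hadef, Complex.ofReal_sum]
    apply Finset.sum_congr rfl
    intro k _
    rw [Complex.star_def, mul_comm, Complex.mul_conj, Complex.normSq_eq_norm_sq]
  have hAij : ∀ i j, ‖A i j‖ ≤ Real.sqrt (a i) * Real.sqrt (a j) := by
    intro i j
    rw [hB]
    simp only [Matrix.mul_apply, Matrix.conjTranspose_apply]
    calc ‖∑ k, (starRingEnd ℂ) (B k i) * B k j‖
        ≤ ∑ k, ‖(starRingEnd ℂ) (B k i) * B k j‖ :=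
          norm_sum_le _ _
      _ = ∑ k, ‖B k i‖ * ‖B k j‖ := by
          apply Finset.sum_congr rfl; intro k _
          rw [norm_mul, Complex.norm_conj]
      _ ≤ Real.sqrt (∑ k, ‖B k i‖ ^ 2) *
          Real.sqrt (∑ k, ‖B k j‖ ^ 2) :=
          Real.sum_mul_le_sqrt_mul_sqrt _ _ _
      _ = Real.sqrt (a i) * Real.sqrt (a j) := rfl
  rw [hL]
  set c : Fin n → ℂ := fun j => ∑ i, (d i j : ℂ) * A i i with hcdef
  have hcreal : ∀ j, c j = ((∑ i, d i j * a i : ℝ) : ℂ) := by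
    intro j
    rw [hcdef]
    push_cast
    apply Finset.sum_congr rfl
    intro i _
    rw [hAdiag i]
  refine Matrix.PosSemidef.of_dotProduct_mulVec_nonneg ?_ ?_
  · -- Hermitian
    apply Matrix.IsHermitian.sub _ hA.1
    apply Matrix.isHermitian_diagonal_of_self_adjoint
    funext j
    simp only [Pi.star_apply, RCLike.star_def]
    rw [hcreal j]
    exact Complex.conj_ofReal _
  · intro x
    set y : Fin n → ℝ := fun i => ‖x i‖ with hydef
    have hy : ∀ i, 0 ≤ y i := fun i => norm_nonneg _
    set w : ℂ := dotProduct (star x) (A *ᵥ x) with hwdef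
    have hw : (0:ℂ) ≤ w := hA.dotProduct_mulVec_nonneg x
    have hwim : w.im = 0 := by
      rw [Complex.le_def] at hw; exact (hw.2).symm
    have hwre : 0 ≤ w.re := by
      rw [Complex.le_def] at hw; simpa using hw.1
    -- bound |w|
    have habs : ‖w‖ ≤ (∑ i, Real.sqrt (a i) * y i)^2 := by
      calc ‖w‖
          ≤ ∑ i, ‖(star x) i * (A *ᵥ x) i‖ := by
            rw [hwdef, dotProduct]
            exact norm_sum_le _ _
        _ ≤ ∑ i, y i * (Real.sqrt (a i) * ∑ j, Real.sqrt (a j) * y j) := by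
            apply Finset.sum_le_sum
            intro i _
            rw [norm_mul]
            have h1 : ‖(star x) i‖ = y i := by
              simp only [Pi.star_apply, RCLike.star_def, Complex.norm_conj, hydef]
            rw [h1]
            apply mul_le_mul_of_nonneg_left _ (hy i)
            calc ‖(A *ᵥ x) i‖
                ≤ ∑ j, ‖A i j * x j‖ := by
                  rw [Matrix.mulVec, dotProduct]
                  exact norm_sum_le _ _
              _ ≤ ∑ j, Real.sqrt (a i) * (Real.sqrt (a j) * y j) := by
                  apply Finset.sum_le_sum
                  intro j _
                  rw [norm_mul]
                  calc ‖A i j‖ * ‖x j‖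
                      ≤ (Real.sqrt (a i) * Real.sqrt (a j)) * y j := by
                        apply mul_le_mul_of_nonneg_right (hAij i j) (hy j)
                    _ = Real.sqrt (a i) * (Real.sqrt (a j) * y j) := by ring
              _ = Real.sqrt (a i) * ∑ j, Real.sqrt (a j) * y j := by
                  rw [Finset.mul_sum]
        _ = (∑ i, Real.sqrt (a i) * y i)^2 := by
            rw [sq, Finset.sum_mul]
            apply Finset.sum_congr rfl
            intro i _
            ring
    have hkey : w.re ≤ ∑ j, (∑ i, d i j * a i) * y j^2 := by
      calc w.re ≤ ‖w‖ := Complex.re_le_norm w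
        _ ≤ (∑ i, Real.sqrt (a i) * y i)^2 := habs
        _ ≤ ∑ j, (∑ i, d i j * a i) * y j^2 :=
            quad_lemma d hd hrow hcol hdiag a y ha hy
    -- compute the quadratic form
    have hsplit : dotProduct (star x) ((Matrix.diagonal c - A) *ᵥ x) =
        ((∑ j, (∑ i, d i j * a i) * y j^2 : ℝ) : ℂ) - w := by
      rw [Matrix.sub_mulVec, dotProduct_sub]
      congr 1
      rw [dotProduct, Complex.ofReal_sum]
      apply Finset.sum_congr rfl
      intro j _
      rw [Matrix.mulVec_diagonal, hcreal j]
      have hre : (star x) j * (((∑ i, d i j * a i : ℝ):ℂ) * x j)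
          = ((∑ i, d i j * a i : ℝ):ℂ) * ((star x) j * x j) := by ring
      rw [hre]
      have hxx : (star x) j * x j = ((y j ^ 2 : ℝ) : ℂ) := by
        simp only [Pi.star_apply, RCLike.star_def]
        rw [← Complex.normSq_eq_conj_mul_self, hydef]
        rw [Complex.sq_norm]
      rw [hxx, ← Complex.ofReal_mul]
    rw [hsplit, Complex.le_def]
    constructor
    · simp only [Complex.sub_re, Complex.ofReal_re, Complex.zero_re]
      linarith
    · rw [Complex.zero_im, Complex.sub_im, Complex.ofReal_im, hwim]
      ring
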